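/- Consider the discrete-time affine state dynamics x(k+1) = A x(k) + B̂ û(k) + L̄ with A ∈ ℝ^{n×n}, B̂ ∈ ℝ^{n×q}, L̄ ∈ ℝ^n, and assume (A, B̂) is controllable. Let û^d : {0,…,T−1} → ℝ^q and x^d : {0,…,T} → ℝ^n satisfy x^d(k+1) = A x^d(k) + B̂ û^d(k) + L̄ for all 0 ≤ k ≤ T−1, and let L ≥ 1 with L ≤ T. If û^d is Hankel exciting of order L + n + 1, then the ((qL + n + 1) × (T−L+1)) matrix obtained by vertically stacking 𝓗_L(û^d), the matrix X_d = [x^d(0), x^d(1), …, x^d(T−L)] ∈ ℝ^{n×(T−L+1)}, and the all-ones row vector of length T−L+1, has full row rank qL + n + 1. -/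

import Mathlib

open Matrix

/-- The block Hankel matrix of depth `k` of a signal `ω : {0,…,T−1} → ℝ^q`:
its `(i,j)` block entry (for `i < k`, `j < T−k+1`) is the vector `ω(i+j) ∈ ℝ^q`. -/
noncomputable def hankelMat {q : ℕ} (T : ℕ) (ω : Fin T → Fin q → ℝ) (k : ℕ) :
    Matrix (Fin k × Fin q) (Fin (T - k + 1)) ℝ := fun r c =>
  if h : (r.1 : ℕ) + (c : ℕ) < T then ω ⟨(r.1 : ℕ) + (c : ℕ), h⟩ r.2 else 0

/-- A signal is Hankel exciting of order `k` if its depth-`k` block Hankel matrix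
has full row rank `q·k`. -/
def HankelExciting {q : ℕ} (T : ℕ) (ω : Fin T → Fin q → ℝ) (k : ℕ) : Prop :=
  (hankelMat T ω k).rank = q * k

/-- The controllability matrix `[B, AB, …, A^{n−1}B]`. -/
noncomputable def ctrbMat {n : ℕ} {ι : Type} [Fintype ι]
    (A : Matrix (Fin n) (Fin n) ℝ) (B : Matrix (Fin n) ι ℝ) :
    Matrix (Fin n) (Fin n × ι) ℝ :=
  Matrix.of fun i p => (A ^ (p.1 : ℕ) * B) i p.2

/-- The pair `(A, B)` is controllable if the controllability matrix has rank `n`. -/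
def Controllable {n : ℕ} {ι : Type} [Fintype ι]
    (A : Matrix (Fin n) (Fin n) ℝ) (B : Matrix (Fin n) ι ℝ) : Prop :=
  (ctrbMat A B).rank = n

/-- The matrix `X_d = [x^d(0), x^d(1), …, x^d(cols−1)]` of stacked states. -/
noncomputable def stateCols {n T : ℕ} (xd : Fin (T + 1) → Fin n → ℝ) (cols : ℕ) :
    Matrix (Fin n) (Fin cols) ℝ := fun i j =>
  if h : (j : ℕ) < T + 1 then xd ⟨(j : ℕ), h⟩ i else 0

namespace Stmt9Aux

open Finset

/-- Full row rank iff the rows are linearly independent. -/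
lemma rank_eq_card_iff_li {m' n' : Type*} [Fintype m'] [Fintype n'] (M : Matrix m' n' ℝ) :
    M.rank = Fintype.card m' ↔ LinearIndependent ℝ (fun i => M i) := by
  rw [Matrix.rank_eq_finrank_span_row, linearIndependent_iff_card_eq_finrank_span, Set.finrank]
  exact eq_comm

/-- A matrix with full row rank has trivial left kernel. -/
lemma left_kernel_eq_zero {m' n' : Type*} [Fintype m'] [Fintype n'] {M : Matrix m' n' ℝ}
    (h : M.rank = Fintype.card m') {v : m' → ℝ}
    (hv : ∀ j, ∑ i, v i * M i j = 0) : ∀ i, v i = 0 := by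
  have hli := (rank_eq_card_iff_li M).mp h
  refine Fintype.linearIndependent_iff.mp hli v ?_
  funext j
  simpa [Finset.sum_apply] using hv j

lemma sum_mulVec {ι m' n' : Type*} [Fintype n'] (s : Finset ι) (f : ι → Matrix m' n' ℝ)
    (v : n' → ℝ) : (∑ i ∈ s, f i) *ᵥ v = ∑ i ∈ s, f i *ᵥ v := by
  induction s using Finset.cons_induction with
  | empty => simp [Matrix.zero_mulVec]
  | cons a s ha ih => simp [Finset.sum_cons, Matrix.add_mulVec, ih]

lemma dotProduct_finsum {ι m' : Type*} [Fintype m'] (s : Finset ι) (v : m' → ℝ)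
    (f : ι → m' → ℝ) : v ⬝ᵥ (∑ i ∈ s, f i) = ∑ i ∈ s, v ⬝ᵥ f i := by
  induction s using Finset.cons_induction with
  | empty => simp
  | cons a s ha ih => simp [Finset.sum_cons, dotProduct_add, ih]

/-- The augmented system matrix `[[A, L̄],[0,1]]`. -/
noncomputable def augA {n : ℕ} (A : Matrix (Fin n) (Fin n) ℝ) (Lb : Fin n → ℝ) :
    Matrix (Fin n ⊕ Unit) (Fin n ⊕ Unit) ℝ :=
  Matrix.fromBlocks A (Matrix.of fun i _ => Lb i) 0 1

/-- The augmented input matrix `[B; 0]`. -/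
noncomputable def augB {n q : ℕ} (Bh : Matrix (Fin n) (Fin q) ℝ) :
    Matrix (Fin n ⊕ Unit) (Fin q) ℝ :=
  Matrix.fromRows Bh 0

lemma augA_pow_mul_augB {n q : ℕ} (A : Matrix (Fin n) (Fin n) ℝ) (Lb : Fin n → ℝ)
    (Bh : Matrix (Fin n) (Fin q) ℝ) (k : ℕ) :
    (augA A Lb) ^ k * augB Bh = Matrix.fromRows (A ^ k * Bh) 0 := by
  induction k with
  | zero => simp [augB]
  | succ k ih =>
    rw [pow_succ', Matrix.mul_assoc, ih, augA, Matrix.fromBlocks_mul_fromRows]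
    rw [Matrix.mul_zero, add_zero, Matrix.zero_mul, Matrix.mul_zero, zero_add,
      ← Matrix.mul_assoc, ← pow_succ']

/-- The augmented state `z(k) = (x(k), 1)`. -/
noncomputable def zf {n : ℕ} (x : ℕ → Fin n → ℝ) (k : ℕ) : (Fin n ⊕ Unit) → ℝ :=
  Sum.elim (x k) (fun _ => 1)

lemma zf_dyn {n q T : ℕ} {A : Matrix (Fin n) (Fin n) ℝ} {Bh : Matrix (Fin n) (Fin q) ℝ}
    {Lb : Fin n → ℝ} {u : ℕ → Fin q → ℝ} {x : ℕ → Fin n → ℝ}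
    (hdyn : ∀ k < T, x (k+1) = A *ᵥ x k + Bh *ᵥ u k + Lb)
    {k : ℕ} (hk : k < T) :
    zf x (k+1) = augA A Lb *ᵥ zf x k + augB Bh *ᵥ u k := by
  have h1 : zf x k ∘ Sum.inl = x k := rfl
  have h2 : zf x k ∘ Sum.inr = fun _ => (1 : ℝ) := rfl
  have : zf x k = Sum.elim (x k) (fun _ => (1:ℝ)) := rfl
  rw [augA, augB, this, Matrix.fromBlocks_mulVec, Matrix.fromRows_mulVec]
  funext i
  cases i with
  | inl i =>
    simp only [Sum.elim_inl, Pi.add_apply, zf, hdyn k hk]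
    have : (Matrix.of fun i (_ : Unit) => Lb i) *ᵥ ((Sum.elim (x k) fun _ => (1:ℝ)) ∘ Sum.inr)
        = Lb := by
      funext i; simp [Matrix.mulVec, dotProduct]
    rw [this]
    simp [Matrix.mulVec]
    ring
  | inr i =>
    simp only [Sum.elim_inr, Pi.add_apply, zf]
    simp [Matrix.mulVec, dotProduct]

lemma zf_trans {n q T : ℕ} {A : Matrix (Fin n) (Fin n) ℝ} {Bh : Matrix (Fin n) (Fin q) ℝ}
    {Lb : Fin n → ℝ} {u : ℕ → Fin q → ℝ} {x : ℕ → Fin n → ℝ}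
    (hdyn : ∀ k < T, x (k+1) = A *ᵥ x k + Bh *ᵥ u k + Lb) :
    ∀ s j, j + s ≤ T → zf x (j+s) = (augA A Lb) ^ s *ᵥ zf x j
      + ∑ t ∈ Finset.range s, (augA A Lb) ^ (s-1-t) *ᵥ (augB Bh *ᵥ u (j+t)) := by
  intro s
  induction s with
  | zero => intro j _; simp
  | succ s ih =>
    intro j h
    have h1 : j + s ≤ T := by omega
    have he : j + (s+1) = (j+s) + 1 := rfl
    rw [he, zf_dyn hdyn (show j + s < T by omega), ih j h1, Matrix.mulVec_add,
      Matrix.mulVec_mulVec, ← pow_succ']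
    rw [Finset.sum_range_succ]
    have hs : ∀ t ∈ Finset.range s,
        (augA A Lb) ^ (s+1-1-t) *ᵥ (augB Bh *ᵥ u (j+t))
          = augA A Lb *ᵥ ((augA A Lb) ^ (s-1-t) *ᵥ (augB Bh *ᵥ u (j+t))) := by
      intro t ht
      have ht' := Finset.mem_range.mp ht
      have he2 : s+1-1-t = (s-1-t)+1 := by omega
      rw [he2, pow_succ', ← Matrix.mulVec_mulVec]
    rw [Finset.sum_congr rfl hs]
    have : augA A Lb *ᵥ (∑ t ∈ Finset.range s, (augA A Lb) ^ (s-1-t) *ᵥ (augB Bh *ᵥ u (j+t)))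
        = ∑ t ∈ Finset.range s, augA A Lb *ᵥ ((augA A Lb) ^ (s-1-t) *ᵥ (augB Bh *ᵥ u (j+t))) := by
      rw [← Matrix.mulVecLin_apply, map_sum]
      simp [Matrix.mulVecLin_apply]
    rw [this]
    have hlast : (augA A Lb) ^ (s+1-1-s) *ᵥ (augB Bh *ᵥ u (j+s)) = augB Bh *ᵥ u (j+s) := by
      have : s+1-1-s = 0 := by omega
      rw [this, pow_zero, Matrix.one_mulVec]
    rw [hlast]
    abel

/-- The annihilating functional on the deep Hankel window. -/
noncomputable def phiN {q : ℕ} (n : ℕ) (a : ℕ → ℝ) (η wv : ℕ → Fin q → ℝ) :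
    ℕ → Fin q → ℝ :=
  fun m p => ∑ s ∈ Finset.range (n+2), a s * (if s ≤ m then η (m-s) p else wv (s-1-m) p)

/-- The key kernel-triviality lemma in ℕ-indexed form. -/
lemma key {n q : ℕ} (A : Matrix (Fin n) (Fin n) ℝ) (Bh : Matrix (Fin n) (Fin q) ℝ)
    (Lb : Fin n → ℝ) (hctrb : Controllable A Bh)
    (T L : ℕ) (hL : 1 ≤ L) (hLT : L ≤ T)
    (u : ℕ → Fin q → ℝ) (x : ℕ → Fin n → ℝ)
    (hdyn : ∀ k < T, x (k+1) = A *ᵥ x k + Bh *ᵥ u k + Lb)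
    (hPE : ∀ φ : ℕ → Fin q → ℝ,
      (∀ j, j ≤ T - (L+n+1) →
        ∑ m ∈ Finset.range (L+n+1), ∑ p, φ m p * u (m + j) p = 0) →
      ∀ m, m < L+n+1 → ∀ p, φ m p = 0)
    (hTn : 0 < q → L + n + 1 ≤ T)
    (η : ℕ → Fin q → ℝ) (hηL : ∀ i, L ≤ i → η i = 0)
    (ξ : Fin n → ℝ) (c : ℝ)
    (hrel : ∀ j, j ≤ T - L →
      (∑ i ∈ Finset.range L, ∑ p, η i p * u (i + j) p) + ((∑ r, ξ r * x j r) + c) = 0) :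
    (∀ i p, η i p = 0) ∧ ξ = 0 ∧ c = 0 := by
  classical
  set ζ : (Fin n ⊕ Unit) → ℝ := Sum.elim ξ (fun _ => c) with hζ
  set a : ℕ → ℝ := fun s => ((augA A Lb).charpoly).coeff s with ha
  set wv : ℕ → Fin q → ℝ := fun k => ζ ᵥ* ((augA A Lb) ^ k * augB Bh) with hwv
  -- basic facts about the characteristic polynomial
  have hcard : Fintype.card (Fin n ⊕ Unit) = n + 1 := by simp
  have hdeg : ((augA A Lb).charpoly).natDegree = n + 1 := by
    rw [Matrix.charpoly_natDegree_eq_dim, hcard]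
  have ha1 : a (n+1) = 1 := by
    have := (Matrix.charpoly_monic (augA A Lb)).coeff_natDegree
    rwa [hdeg] at this
  have haC : ∑ s ∈ Finset.range (n+2), a s • (augA A Lb) ^ s = 0 := by
    have h0 := Matrix.aeval_self_charpoly (augA A Lb)
    rwa [Polynomial.aeval_eq_sum_range' (by omega : ((augA A Lb).charpoly).natDegree < n + 2)]
      at h0
  -- the relation in augmented form
  have hζz : ∀ j, ζ ⬝ᵥ zf x j = (∑ r, ξ r * x j r) + c := by
    intro j
    rw [hζ, zf, sumElim_dotProduct_sumElim]
    simp [dotProduct]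
  have hrelz : ∀ j, j ≤ T - L →
      (∑ i ∈ Finset.range L, ∑ p, η i p * u (i + j) p) + ζ ⬝ᵥ zf x j = 0 := by
    intro j hj; rw [hζz]; exact hrel j hj
  -- dot product with shifted input terms
  have hwdot : ∀ k v, ζ ⬝ᵥ ((augA A Lb) ^ k *ᵥ (augB Bh *ᵥ v)) = ∑ p, wv k p * v p := by
    intro k v
    rw [Matrix.dotProduct_mulVec, Matrix.dotProduct_mulVec, Matrix.vecMul_vecMul]
    rfl
  -- Claim 1: the functional `phiN` annihilates the deep Hankel matrix
  have claim1 : L + n + 1 ≤ T → ∀ j, j ≤ T - (L+n+1) →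
      ∑ m ∈ Finset.range (L+n+1), ∑ p, phiN n a η wv m p * u (m + j) p = 0 := by
    intro hT j hj
    have step1 : ∀ s ∈ Finset.range (n+2),
        (∑ m ∈ Finset.range (L+n+1), ∑ p,
          (if s ≤ m then η (m-s) p else wv (s-1-m) p) * u (m + j) p)
        = -(ζ ⬝ᵥ ((augA A Lb) ^ s *ᵥ zf x j)) := by
      intro s hs
      have hs' : s ≤ n + 1 := Nat.lt_succ_iff.mp (Finset.mem_range.mp hs)
      have hx := hrelz (j+s) (by omega)
      have hzz := zf_trans hdyn s j (by omega)
      calc ∑ m ∈ Finset.range (L+n+1), ∑ p,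
              (if s ≤ m then η (m-s) p else wv (s-1-m) p) * u (m + j) p
          = (∑ m ∈ Finset.Ico 0 s, ∑ p,
              (if s ≤ m then η (m-s) p else wv (s-1-m) p) * u (m + j) p)
            + ∑ m ∈ Finset.Ico s (L+n+1), ∑ p,
              (if s ≤ m then η (m-s) p else wv (s-1-m) p) * u (m + j) p := by
            rw [Finset.range_eq_Ico,
              ← Finset.sum_Ico_consecutive _ (Nat.zero_le s) (by omega : s ≤ L+n+1)]
        _ = (∑ t ∈ Finset.range s, ∑ p, wv (s-1-t) p * u (j + t) p)
            + ∑ i ∈ Finset.range L, ∑ p, η i p * u (i + (j+s)) p := by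
            congr 1
            · rw [← Finset.range_eq_Ico]
              refine Finset.sum_congr rfl fun m hm => Finset.sum_congr rfl fun p _ => ?_
              have hm' := Finset.mem_range.mp hm
              rw [if_neg (by omega), Nat.add_comm m j]
            · rw [Finset.sum_Ico_eq_sum_range]
              have e0 : ∀ i ∈ Finset.range (L+n+1-s), i ∉ Finset.range L →
                  (∑ p, (if s ≤ s+i then η (s+i-s) p else wv (s-1-(s+i)) p)
                    * u (s+i+j) p) = 0 := by
                intro i _ hni
                have hLi : L ≤ i := le_of_not_gt fun hlt => hni (Finset.mem_range.mpr hlt)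
                refine Finset.sum_eq_zero fun p _ => ?_
                rw [if_pos (by omega), show s+i-s = i from by omega, hηL i hLi]
                simp
              rw [← Finset.sum_subset
                (Finset.range_subset_range.mpr (by omega : L ≤ L+n+1-s)) e0]
              refine Finset.sum_congr rfl fun i hi => Finset.sum_congr rfl fun p _ => ?_
              rw [if_pos (by omega), show s+i-s = i from by omega,
                show s+i+j = i+(j+s) from by omega]
        _ = (∑ t ∈ Finset.range s, ∑ p, wv (s-1-t) p * u (j + t) p)
            + -(ζ ⬝ᵥ zf x (j+s)) := by
            congr 1
            exact eq_neg_of_add_eq_zero_left hx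
        _ = -(ζ ⬝ᵥ ((augA A Lb) ^ s *ᵥ zf x j)) := by
            rw [hzz, dotProduct_add, dotProduct_finsum]
            simp_rw [hwdot]
            ring
    have reorder : ∑ m ∈ Finset.range (L+n+1), ∑ p, phiN n a η wv m p * u (m + j) p
        = ∑ s ∈ Finset.range (n+2), a s *
            ∑ m ∈ Finset.range (L+n+1), ∑ p,
              (if s ≤ m then η (m-s) p else wv (s-1-m) p) * u (m+j) p := by
      simp_rw [phiN, Finset.sum_mul, Finset.mul_sum, mul_assoc]
      calc ∑ m ∈ Finset.range (L+n+1), ∑ p, ∑ s ∈ Finset.range (n+2),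
              a s * ((if s ≤ m then η (m-s) p else wv (s-1-m) p) * u (m+j) p)
          = ∑ m ∈ Finset.range (L+n+1), ∑ s ∈ Finset.range (n+2), ∑ p,
              a s * ((if s ≤ m then η (m-s) p else wv (s-1-m) p) * u (m+j) p) :=
            Finset.sum_congr rfl fun m _ => Finset.sum_comm
        _ = ∑ s ∈ Finset.range (n+2), ∑ m ∈ Finset.range (L+n+1), ∑ p,
              a s * ((if s ≤ m then η (m-s) p else wv (s-1-m) p) * u (m+j) p) :=
            Finset.sum_comm
    rw [reorder,
      Finset.sum_congr rfl (fun s hs => by rw [step1 s hs] :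
        ∀ s ∈ Finset.range (n+2), a s * (∑ m ∈ Finset.range (L+n+1), ∑ p,
          (if s ≤ m then η (m-s) p else wv (s-1-m) p) * u (m+j) p)
            = a s * -(ζ ⬝ᵥ ((augA A Lb)^s *ᵥ zf x j)))]
    have hpush : ∑ s ∈ Finset.range (n+2), a s * -(ζ ⬝ᵥ ((augA A Lb)^s *ᵥ zf x j))
        = -(ζ ⬝ᵥ ((∑ s ∈ Finset.range (n+2), a s • (augA A Lb)^s) *ᵥ zf x j)) := by
      rw [sum_mulVec, dotProduct_finsum, ← Finset.sum_neg_distrib]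
      refine Finset.sum_congr rfl fun s _ => ?_
      rw [smul_mulVec, dotProduct_smul, smul_eq_mul, mul_neg]
    rw [hpush, haC, Matrix.zero_mulVec, dotProduct_zero, neg_zero]
  have hφ : 0 < q → ∀ m, m < L+n+1 → ∀ p, phiN n a η wv m p = 0 :=
    fun hq => hPE _ (claim1 (hTn hq))
  -- η vanishes
  have hcoreη : 0 < q → ∀ i, i < L → (∀ i', i < i' → ∀ p', η i' p' = 0) →
      ∀ p, η i p = 0 := by
    intro hq i hi hind p
    have h0 := hφ hq (i+n+1) (by omega) p
    rw [phiN, Finset.sum_range_succ] at h0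
    have hmain : ∀ s ∈ Finset.range (n+1),
        a s * (if s ≤ i+n+1 then η (i+n+1-s) p else wv (s-1-(i+n+1)) p) = 0 := by
      intro s hs
      have hs' := Finset.mem_range.mp hs
      rw [if_pos (by omega), hind (i+n+1-s) (by omega) p, mul_zero]
    rw [Finset.sum_eq_zero hmain, zero_add, if_pos (by omega),
      show i+n+1-(n+1) = i from by omega, ha1, one_mul] at h0
    exact h0
  have hdownη : ∀ d, ∀ i, L ≤ i + d + 1 → ∀ p, η i p = 0 := by
    intro d
    induction d with
    | zero =>
      intro i h p
      rcases le_or_gt L i with hge | hlt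
      · rw [hηL i hge]; rfl
      rcases Nat.eq_zero_or_pos q with hq | hq
      · exact (Fin.cast hq p).elim0
      exact hcoreη hq i hlt (fun i' hi' p' => by rw [hηL i' (by omega)]; rfl) p
    | succ d ih =>
      intro i h p
      rcases le_or_gt L i with hge | hlt
      · rw [hηL i hge]; rfl
      rcases Nat.eq_zero_or_pos q with hq | hq
      · exact (Fin.cast hq p).elim0
      exact hcoreη hq i hlt (fun i' hi' p' => ih i' (by omega) p') p
  have hη0 : ∀ i p, η i p = 0 := fun i p => hdownη L i (by omega) p
  -- wv vanishes up to order n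
  have hw0 : ∀ k, k ≤ n → ∀ p, wv k p = 0 := by
    intro k
    induction k using Nat.strong_induction_on with
    | _ k ih =>
      intro hk p
      rcases Nat.eq_zero_or_pos q with hq | hq
      · exact (Fin.cast hq p).elim0
      have h0 := hφ hq (n - k) (by omega) p
      rw [phiN, Finset.sum_range_succ] at h0
      have hmain : ∀ s ∈ Finset.range (n+1),
          a s * (if s ≤ n-k then η (n-k-s) p else wv (s-1-(n-k)) p) = 0 := by
        intro s hs
        have hs' := Finset.mem_range.mp hs
        rcases le_or_gt s (n-k) with hle | hgt
        · rw [if_pos hle, hη0 _ p, mul_zero]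
        · rw [if_neg (by omega), ih (s-1-(n-k)) (by omega) (by omega) p, mul_zero]
      rw [Finset.sum_eq_zero hmain, zero_add, if_neg (by omega), ha1, one_mul,
        show n+1-1-(n-k) = k from by omega] at h0
      exact h0
  -- conclude ξ = 0 by controllability
  have hwξ : ∀ k, wv k = ξ ᵥ* (A ^ k * Bh) := by
    intro k
    rw [hwv]
    show ζ ᵥ* ((augA A Lb)^k * augB Bh) = _
    rw [augA_pow_mul_augB, hζ, Matrix.sumElim_vecMul_fromRows, Matrix.vecMul_zero, add_zero]
  have hξker : ∀ pr : Fin n × Fin q, ∑ i, ξ i * ctrbMat A Bh i pr = 0 := by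
    intro pr
    have h1 : ∑ i, ξ i * ctrbMat A Bh i pr = (ξ ᵥ* (A ^ (pr.1 : ℕ) * Bh)) pr.2 := by
      simp [ctrbMat, Matrix.vecMul, dotProduct]
    rw [h1, ← hwξ]
    exact hw0 (pr.1 : ℕ) (Nat.le_of_lt pr.1.isLt) pr.2
  have hrC : (ctrbMat A Bh).rank = Fintype.card (Fin n) := by
    rw [Fintype.card_fin]; exact hctrb
  have hξ0 : ξ = 0 := by
    funext i
    exact left_kernel_eq_zero hrC hξker i
  -- conclude c = 0
  have hc0 : c = 0 := by
    have h := hrel 0 (Nat.zero_le _)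
    simp only [hη0, zero_mul, Finset.sum_const_zero, hξ0, Pi.zero_apply] at h
    linarith
  exact ⟨hη0, hξ0, hc0⟩

end Stmt9Aux

theorem stmt9 {n q T : ℕ}
    (A : Matrix (Fin n) (Fin n) ℝ) (Bh : Matrix (Fin n) (Fin q) ℝ) (Lb : Fin n → ℝ)
    (hctrb : Controllable A Bh)
    (ud : Fin T → Fin q → ℝ) (xd : Fin (T + 1) → Fin n → ℝ)
    (hdyn : ∀ k : Fin T, xd k.succ = A *ᵥ xd k.castSucc + Bh *ᵥ ud k + Lb)
    (L : ℕ) (hL : 1 ≤ L) (hLT : L ≤ T)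
    (hexc : HankelExciting T ud (L + n + 1)) :
    (Matrix.fromRows
      (Matrix.fromRows (hankelMat T ud L) (stateCols xd (T - L + 1)))
      (Matrix.of fun (_ : Unit) (_ : Fin (T - L + 1)) => (1 : ℝ))).rank
      = q * L + n + 1 := by
  classical
  have hexc' : (hankelMat T ud (L + n + 1)).rank = q * (L + n + 1) := hexc
  have hctrb' : (ctrbMat A Bh).rank = n := hctrb
  set u' : ℕ → Fin q → ℝ := fun k p => if h : k < T then ud ⟨k, h⟩ p else 0 with hu'
  set x' : ℕ → Fin n → ℝ := fun k i => if h : k < T + 1 then xd ⟨k, h⟩ i else 0 with hx'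
  have hcard : Fintype.card (((Fin L × Fin q) ⊕ Fin n) ⊕ Unit) = q * L + n + 1 := by
    simp [Fintype.card_sum, Fintype.card_prod, Nat.mul_comm]
  rw [← hcard, Stmt9Aux.rank_eq_card_iff_li, Fintype.linearIndependent_iff]
  intro g hg
  set ηN : ℕ → Fin q → ℝ :=
    fun i p => if h : i < L then g (Sum.inl (Sum.inl (⟨i, h⟩, p))) else 0 with hηN
  set ξ : Fin n → ℝ := fun i => g (Sum.inl (Sum.inr i)) with hξdef
  set c : ℝ := g (Sum.inr ()) with hcdef
  -- dynamics in ℕ-indexed form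
  have hdyn' : ∀ k < T, x' (k+1) = A *ᵥ x' k + Bh *ᵥ u' k + Lb := by
    intro k hk
    have e1 : x' (k+1) = xd (Fin.succ ⟨k, hk⟩) := by
      funext i
      simp only [hx']
      rw [dif_pos (show k+1 < T+1 from by omega)]
      rfl
    have e2 : x' k = xd (Fin.castSucc ⟨k, hk⟩) := by
      funext i
      simp only [hx']
      rw [dif_pos (show k < T+1 from by omega)]
      rfl
    have e3 : u' k = ud ⟨k, hk⟩ := by
      funext p
      simp only [hu']
      rw [dif_pos hk]
    rw [e1, e2, e3, hdyn]
  -- persistency of excitation in ℕ-indexed form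
  have hPE' : ∀ φ : ℕ → Fin q → ℝ,
      (∀ j, j ≤ T - (L+n+1) →
        ∑ m ∈ Finset.range (L+n+1), ∑ p, φ m p * u' (m + j) p = 0) →
      ∀ m, m < L+n+1 → ∀ p, φ m p = 0 := by
    intro φ hφ m hm p
    have hrk : (hankelMat T ud (L+n+1)).rank = Fintype.card (Fin (L+n+1) × Fin q) := by
      rw [hexc', Fintype.card_prod, Fintype.card_fin, Fintype.card_fin, Nat.mul_comm]
    have hker := Stmt9Aux.left_kernel_eq_zero hrk
      (v := fun r : Fin (L+n+1) × Fin q => φ (r.1 : ℕ) r.2) ?_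
    · exact hker (⟨m, hm⟩, p)
    intro j
    have hH : ∀ (r1 : Fin (L+n+1)) (p' : Fin q),
        hankelMat T ud (L+n+1) (r1, p') j = u' ((r1 : ℕ) + (j : ℕ)) p' := by
      intro r1 p'
      simp only [hankelMat, hu']
    have hconv : ∑ r : Fin (L+n+1) × Fin q,
          φ (r.1 : ℕ) r.2 * hankelMat T ud (L+n+1) r j
        = ∑ mm ∈ Finset.range (L+n+1), ∑ p', φ mm p' * u' (mm + (j : ℕ)) p' := by
      rw [Fintype.sum_prod_type,
        ← Fin.sum_univ_eq_sum_range (fun mm => ∑ p', φ mm p' * u' (mm + (j : ℕ)) p')]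
      exact Finset.sum_congr rfl fun r1 _ => Finset.sum_congr rfl fun p' _ => by rw [hH]
    rw [hconv]
    exact hφ (j : ℕ) (Nat.lt_succ_iff.mp j.isLt)
  -- length bound
  have hTn' : 0 < q → L + n + 1 ≤ T := by
    intro hq
    by_contra hcon
    have h1 : (hankelMat T ud (L+n+1)).rank ≤ T - (L+n+1) + 1 := by
      simpa using Matrix.rank_le_card_width (hankelMat T ud (L+n+1))
    rw [hexc'] at h1
    have h2 : T - (L+n+1) = 0 := by omega
    have h3 : L+n+1 ≤ q*(L+n+1) := Nat.le_mul_of_pos_left _ hq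
    omega
  have hηL' : ∀ i, L ≤ i → ηN i = 0 := by
    intro i hi
    funext p
    simp only [hηN]
    rw [dif_neg (by omega)]
    rfl
  -- the kernel relation
  have hrel' : ∀ j, j ≤ T - L →
      (∑ i ∈ Finset.range L, ∑ p, ηN i p * u' (i + j) p)
        + ((∑ r, ξ r * x' j r) + c) = 0 := by
    intro j hj
    have hjF : j < T - L + 1 := by omega
    have h := congrFun hg ⟨j, hjF⟩
    simp only [Finset.sum_apply, Pi.smul_apply, smul_eq_mul, Pi.zero_apply,
      Fintype.sum_sum_type, Matrix.fromRows_apply_inl, Matrix.fromRows_apply_inr,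
      Matrix.of_apply] at h
    have hHa : ∀ r : Fin L × Fin q,
        g (Sum.inl (Sum.inl r)) * hankelMat T ud L r ⟨j, hjF⟩
          = ηN (r.1 : ℕ) r.2 * u' ((r.1 : ℕ) + j) r.2 := by
      intro r
      congr 1
      · simp only [hηN]
        rw [dif_pos r.1.isLt]
    have hXa : ∀ i : Fin n,
        g (Sum.inl (Sum.inr i)) * stateCols xd (T - L + 1) i ⟨j, hjF⟩
          = ξ i * x' j i := by
      intro i
      congr 1
    have hconv : ∑ r : Fin L × Fin q,
          g (Sum.inl (Sum.inl r)) * hankelMat T ud L r ⟨j, hjF⟩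
        = ∑ i ∈ Finset.range L, ∑ p, ηN i p * u' (i + j) p := by
      rw [Fintype.sum_prod_type,
        ← Fin.sum_univ_eq_sum_range (fun i => ∑ p, ηN i p * u' (i + j) p)]
      refine Finset.sum_congr rfl fun r1 _ => Finset.sum_congr rfl fun p _ => ?_
      exact hHa (r1, p)
    rw [hconv, Finset.sum_congr rfl (fun i _ => hXa i)] at h
    simp only [Finset.univ_unique, Finset.sum_singleton, mul_one] at h
    linarith [h]
  obtain ⟨hη0, hξ0, hc0⟩ := Stmt9Aux.key A Bh Lb hctrb T L hL hLT u' x'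
    hdyn' hPE' hTn' ηN hηL' ξ c hrel'
  intro I
  obtain (r | i) | uu := I
  · have h := hη0 (r.1 : ℕ) r.2
    simp only [hηN] at h
    rw [dif_pos r.1.isLt] at h
    exact h
  · exact congrFun hξ0 i
  · exact hc0
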